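/- There is an absolute positive constant C such that the following holds. If u_1 n + v_1, ..., u_s n + v_s are s ≥ 5 pairwise distinct linear functions with integer coefficients satisfying gcd(u_i, v_i) = 1 and u_i ≥ 1 for all 1 ≤ i ≤ s, then there is a subset S ⊆ {1, ..., s} with #S ≥ C·s/log s such that {u_i n + v_i : i ∈ S} is an admissible set of linear functions. -/

import Mathlib

open Finset Real

/-- primes up to N -/
def PP (N : ℕ) : Finset ℕ := (Finset.range (N+1)).filter Nat.Prime

lemma mem_PP {N p : ℕ} : p ∈ PP N ↔ p ≤ N ∧ p.Prime := by
  simp [PP, Nat.lt_succ_iff, and_comm]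

lemma theta_le (N : ℕ) : ∑ p ∈ PP N, Real.log p ≤ N * Real.log 4 := by
  have h1 : (primorial N : ℝ) ≤ (4:ℝ) ^ N := by
    exact_mod_cast primorial_le_4_pow N
  have h2 : Real.log (primorial N) ≤ Real.log ((4:ℝ)^N) :=
    Real.log_le_log (by exact_mod_cast primorial_pos N) h1
  rw [Real.log_pow] at h2
  have h3 : Real.log (primorial N) = ∑ p ∈ PP N, Real.log p := by
    rw [primorial]
    push_cast
    rw [Real.log_prod]
    · rfl
    · intro p hp
      have := (Finset.mem_filter.1 hp).2.pos
      positivity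
  rw [h3] at h2
  exact_mod_cast h2

lemma prodpow_dvd_factorial (N : ℕ) : (∏ p ∈ PP N, p ^ (N / p)) ∣ Nat.factorial N := by
  classical
  have hQ : ∀ p ∈ PP N, p.Prime := fun p hp => (mem_PP.1 hp).2
  -- generic induction
  have main : ∀ Q : Finset ℕ, (∀ p ∈ Q, p.Prime) → (∀ p ∈ Q, p ^ (N / p) ∣ Nat.factorial N) →
      (∏ p ∈ Q, p ^ (N / p)) ∣ Nat.factorial N := by
    intro Q
    induction Q using Finset.induction_on with
    | empty => simp
    | @insert q Q' hq ih =>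
      intro hprime hdvd
      rw [Finset.prod_insert hq]
      have hco : Nat.Coprime (q ^ (N / q)) (∏ p ∈ Q', p ^ (N / p)) := by
        apply Nat.Coprime.pow_left
        apply Nat.Coprime.prod_right
        intro p hp
        apply Nat.Coprime.pow_right
        rw [Nat.coprime_primes (hprime q (Finset.mem_insert_self _ _))
          (hprime p (Finset.mem_insert_of_mem hp))]
        rintro rfl; exact hq hp
      exact hco.mul_dvd_of_dvd_of_dvd (hdvd q (Finset.mem_insert_self _ _))
        (ih (fun p hp => hprime p (Finset.mem_insert_of_mem hp))
            (fun p hp => hdvd p (Finset.mem_insert_of_mem hp)))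
  apply main _ hQ
  intro p hp
  have hp' := (mem_PP.1 hp).2
  rw [Nat.Prime.pow_dvd_factorial_iff hp' (Nat.lt_succ_self _)]
  rcases Nat.eq_zero_or_pos (Nat.log p N) with h0 | h0
  · have hz : N / p = 0 := by
      rcases Nat.eq_zero_or_pos N with rfl | hN
      · simp
      · rcases Nat.log_eq_zero_iff.1 h0 with h | h
        · exact Nat.div_eq_of_lt h
        · exact absurd h (by have := hp'.two_le; omega)
    simp [hz]
  · calc N / p = N / p ^ 1 := by rw [pow_one]
      _ ≤ ∑ i ∈ Finset.Ico 1 (Nat.log p N + 1), N / p ^ i := by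
          apply Finset.single_le_sum (f := fun i => N / p ^ i)
          · intro i _; exact Nat.zero_le _
          · rw [Finset.mem_Ico]; omega

lemma mertens1 {N : ℕ} (hN : 1 ≤ N) :
    ∑ p ∈ PP N, Real.log p / p ≤ Real.log N + Real.log 4 := by
  have hNpos : (0:ℝ) < N := by exact_mod_cast hN
  have hdvd := prodpow_dvd_factorial N
  have hfacpos : 0 < Nat.factorial N := Nat.factorial_pos N
  have hle : (∏ p ∈ PP N, p ^ (N / p)) ≤ Nat.factorial N :=
    Nat.le_of_dvd hfacpos hdvd
  have hlog1 : Real.log (∏ p ∈ PP N, p ^ (N / p) : ℕ) ≤ Real.log (Nat.factorial N) :=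
    Real.log_le_log (by exact_mod_cast Finset.prod_pos fun p hp => pow_pos (mem_PP.1 hp).2.pos _) (by exact_mod_cast hle)
  have hlog2 : Real.log (Nat.factorial N) ≤ N * Real.log N := by
    have h1 : Nat.factorial N ≤ N ^ N := Nat.factorial_le_pow N
    have := Real.log_le_log (by exact_mod_cast hfacpos) (show (Nat.factorial N : ℝ) ≤ (N:ℝ)^N by exact_mod_cast h1)
    rwa [Real.log_pow] at this
  have hlog3 : Real.log (∏ p ∈ PP N, p ^ (N / p) : ℕ)
      = ∑ p ∈ PP N, (N / p : ℕ) * Real.log p := by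
    push_cast
    rw [Real.log_prod]
    · exact Finset.sum_congr rfl fun p hp => by
        rw [Real.log_pow]
    · intro p hp
      have := (mem_PP.1 hp).2.pos
      positivity
  have key : ∑ p ∈ PP N, ((N:ℝ) / p - 1) * Real.log p ≤ N * Real.log N := by
    refine le_trans (Finset.sum_le_sum fun p hp => ?_) (by rw [← hlog3]; exact hlog1.trans hlog2)
    have hppos : (0:ℝ) < p := by exact_mod_cast (mem_PP.1 hp).2.pos
    have hlogp : (0:ℝ) ≤ Real.log p := Real.log_natCast_nonneg p
    apply mul_le_mul_of_nonneg_right _ hlogp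
    -- (N/p : ℝ) - 1 ≤ ↑(N / p)
    have := Nat.lt_mul_div_succ N (show 0 < p from (mem_PP.1 hp).2.pos)
    have h2 : (N:ℝ) < p * ((N/p : ℕ) + 1) := by exact_mod_cast this
    rw [div_sub_one (ne_of_gt hppos), div_le_iff₀ hppos]
    nlinarith
  -- now conclude
  have expand : ∑ p ∈ PP N, ((N:ℝ) / p - 1) * Real.log p
      = N * (∑ p ∈ PP N, Real.log p / p) - ∑ p ∈ PP N, Real.log p := by
    rw [Finset.mul_sum, ← Finset.sum_sub_distrib]
    refine Finset.sum_congr rfl fun p hp => ?_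
    have hppos : (0:ℝ) < p := by exact_mod_cast (mem_PP.1 hp).2.pos
    field_simp
  have htheta := theta_le N
  rw [expand] at key
  have : N * (∑ p ∈ PP N, Real.log p / p) ≤ N * Real.log N + N * Real.log 4 := by
    linarith
  have := (mul_le_mul_iff_right₀ hNpos).1 (by linarith [this] : (N:ℝ) * (∑ p ∈ PP N, Real.log p / p) ≤ N * (Real.log N + Real.log 4))
  linarith

noncomputable def Afun (n : ℕ) : ℝ := ∑ p ∈ PP n, Real.log p / p
noncomputable def PSfun (n : ℕ) : ℝ := ∑ p ∈ PP n, 1 / (p:ℝ)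
noncomputable def Ufun (n : ℕ) : ℝ :=
  PSfun n - Real.log (Real.log n) - (Afun n - Real.log 4) / Real.log n

lemma PP_succ (n : ℕ) :
    PP (n+1) = if (n+1).Prime then insert (n+1) (PP n) else PP n := by
  rw [PP, Finset.range_add_one, Finset.filter_insert]
  split <;> rfl

lemma Ustep {n : ℕ} (hn : 2 ≤ n) : Ufun (n+1) ≤ Ufun n := by
  have hL : (0:ℝ) < Real.log n := by
    apply Real.log_pos; exact_mod_cast by omega
  have hL' : (0:ℝ) < Real.log (n+1) := by
    apply Real.log_pos; exact_mod_cast by omega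
  have hLL' : Real.log n ≤ Real.log (n+1) := by
    apply Real.log_le_log (by positivity)
    exact_mod_cast Nat.le_succ n
  have hnot : (n+1) ∉ PP n := by
    intro h; exact absurd (mem_PP.1 h).1 (by omega)
  -- difference identities
  have hA : Afun (n+1) = Afun n + (if (n+1).Prime then Real.log (n+1) / (n+1) else 0) := by
    rw [Afun, Afun, PP_succ]
    split
    · rw [Finset.sum_insert hnot]; push_cast; ring
    · simp
  have hPS : PSfun (n+1) = PSfun n
      + (if (n+1).Prime then Real.log (n+1) / (n+1) else 0) / Real.log (n+1) := by
    rw [PSfun, PSfun, PP_succ]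
    split
    · rw [Finset.sum_insert hnot]
      rw [div_div, mul_comm, ← div_div]
      rw [div_self (ne_of_gt hL')]
      push_cast; ring
    · simp
  set a : ℝ := (if (n+1).Prime then Real.log (n+1) / (n+1) else 0) with ha
  -- main computation
  have hM1 : Afun n - Real.log 4 ≤ Real.log n := by
    have := mertens1 (show 1 ≤ n by omega)
    rw [Afun]; linarith
  have hkey : (Afun n - Real.log 4) * (1/Real.log n - 1/Real.log (n+1))
      ≤ Real.log n * (1/Real.log n - 1/Real.log (n+1)) := by
    apply mul_le_mul_of_nonneg_right hM1
    have : 1/Real.log (n+1) ≤ 1/Real.log n := by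
      apply one_div_le_one_div_of_le hL hLL'
    linarith
  have hlog : 1 - Real.log n / Real.log (n+1)
      ≤ Real.log (Real.log (n+1)) - Real.log (Real.log n) := by
    have hx : (0:ℝ) < Real.log n / Real.log (n+1) := by positivity
    have h1 := Real.log_le_sub_one_of_pos hx
    rw [Real.log_div (ne_of_gt hL) (ne_of_gt hL')] at h1
    linarith
  rw [Ufun, Ufun, hA, hPS]
  have hexp : Real.log n * (1/Real.log n - 1/Real.log (n+1))
      = 1 - Real.log n / Real.log (n+1) := by
    field_simp
  have haL' : a / Real.log (n+1) - (a) / Real.log (n+1) = 0 := by ring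
  -- rearrange target
  have target : PSfun n + a / Real.log (n+1) - Real.log (Real.log (n+1))
      - (Afun n + a - Real.log 4) / Real.log (n+1)
      ≤ PSfun n - Real.log (Real.log n) - (Afun n - Real.log 4) / Real.log n := by
    have expand : PSfun n + a / Real.log (n+1) - Real.log (Real.log (n+1))
        - (Afun n + a - Real.log 4) / Real.log (n+1)
        - (PSfun n - Real.log (Real.log n) - (Afun n - Real.log 4) / Real.log n)
        = (Afun n - Real.log 4) * (1/Real.log n - 1/Real.log (n+1))
          - (Real.log (Real.log (n+1)) - Real.log (Real.log n)) := by
      field_simp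
      ring
    nlinarith [hkey, hlog, hexp]
  exact_mod_cast target

lemma Umono {N : ℕ} (hN : 2 ≤ N) : Ufun N ≤ Ufun 2 := by
  induction N with
  | zero => omega
  | succ n ih =>
    rcases Nat.lt_or_ge n 2 with h | h
    · interval_cases n
      · omega
      · exact le_refl _
    · exact le_trans (Ustep h) (ih (by omega))

lemma PP_two : PP 2 = {2} := by decide

lemma U2_le : Ufun 2 ≤ (5:ℝ)/2 := by
  have hlog2 : (0.6931471803:ℝ) < Real.log 2 := Real.log_two_gt_d9
  have h4 : Real.log 4 = 2 * Real.log 2 := by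
    rw [show (4:ℝ) = 2^2 by norm_num, Real.log_pow]; push_cast; ring
  have hA2 : Afun 2 = Real.log 2 / 2 := by
    rw [Afun, PP_two, Finset.sum_singleton]; norm_num
  have hPS2 : PSfun 2 = 1/2 := by
    rw [PSfun, PP_two, Finset.sum_singleton]; norm_num
  have hL2 : (0:ℝ) < Real.log 2 := by linarith
  have hll2 : -Real.log (Real.log 2) ≤ 1/2 := by
    have h1 := Real.log_le_sub_one_of_pos (show (0:ℝ) < 1/Real.log 2 by positivity)
    rw [Real.log_div one_ne_zero (ne_of_gt hL2), Real.log_one] at h1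
    have : 1/Real.log 2 ≤ 1.45 := by
      rw [div_le_iff₀ hL2]; nlinarith
    linarith
  rw [Ufun, hA2, hPS2, h4]
  have : (Real.log 2 / 2 - 2 * Real.log 2) / Real.log 2 = 1/2 - 2 := by
    field_simp
  push_cast
  rw [this]
  linarith

lemma mertens2 {N : ℕ} (hN : 2 ≤ N) :
    ∑ p ∈ PP N, 1 / (p:ℝ) ≤ Real.log (Real.log N) + 4 := by
  have hL : (0:ℝ) < Real.log N := by
    apply Real.log_pos; exact_mod_cast by omega
  have hU := (Umono hN).trans U2_le
  have hM1 : Afun N - Real.log 4 ≤ Real.log N := by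
    have := mertens1 (show 1 ≤ N by omega)
    rw [Afun]; linarith
  have hexpand : (∑ p ∈ PP N, 1 / (p:ℝ))
      = Ufun N + Real.log (Real.log N) + (Afun N - Real.log 4) / Real.log N := by
    rw [Ufun, PSfun]; ring
  rw [hexpand]
  have : (Afun N - Real.log 4) / Real.log N ≤ 1 := by
    rw [div_le_one hL]; linarith
  linarith

lemma telescope_le {N : ℕ} : ∑ n ∈ Finset.Icc 2 N, (1/((n:ℝ)-1) - 1/n) ≤ 1 := by
  induction N with
  | zero => simp
  | succ N ih =>
    rcases Nat.lt_or_ge N 1 with h | h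
    · interval_cases N
      · simp
    · rw [Finset.sum_Icc_succ_top (by omega : 2 ≤ N + 1)]
      have hsum : ∑ n ∈ Finset.Icc 2 N, (1/((n:ℝ)-1) - 1/n) = 1 - 1/N := by
        clear ih
        induction N with
        | zero => omega
        | succ M ihM =>
          rcases Nat.lt_or_ge M 1 with h2 | h2
          · interval_cases M
            · norm_num
          · rw [Finset.sum_Icc_succ_top (by omega : 2 ≤ M + 1), ihM (by omega)]
            have hM : (0:ℝ) < M := by exact_mod_cast h2
            push_cast
            rw [add_sub_cancel_right]
            field_simp
            ring
      rw [hsum]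
      have hN : (0:ℝ) < N := by exact_mod_cast h
      have h1 : (0:ℝ) < (N:ℝ) + 1 := by linarith
      push_cast
      rw [add_sub_cancel_right]
      have : 1/((N:ℝ)+1) ≤ 1/N := by
        apply one_div_le_one_div_of_le hN; linarith
      have hpos : (0:ℝ) < 1/((N:ℝ)+1) := by positivity
      linarith

lemma sum_inv_pred_le {N : ℕ} (hN : 2 ≤ N) :
    ∑ p ∈ PP N, 1/((p:ℝ)-1) ≤ Real.log (Real.log N) + 5 := by
  have hsplit : ∀ p ∈ PP N, 1/((p:ℝ)-1) = 1/p + (1/((p:ℝ)-1) - 1/p) := by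
    intro p hp; ring
  rw [Finset.sum_congr rfl hsplit, Finset.sum_add_distrib]
  have h2 : ∑ p ∈ PP N, (1/((p:ℝ)-1) - 1/p) ≤ 1 := by
    refine le_trans ?_ (telescope_le (N := N))
    apply Finset.sum_le_sum_of_subset_of_nonneg
    · intro p hp
      rw [Finset.mem_Icc]
      exact ⟨(mem_PP.1 hp).2.two_le, (mem_PP.1 hp).1⟩
    · intro n hn _
      rw [Finset.mem_Icc] at hn
      have h1 : (1:ℝ) < n := by exact_mod_cast by omega
      have := one_div_le_one_div_of_le (by linarith : (0:ℝ) < (n:ℝ) - 1) (by linarith : (n:ℝ) - 1 ≤ n)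
      linarith
  have := mertens2 hN
  linarith

lemma mertens3 {N : ℕ} (hN : 2 ≤ N) :
    Real.exp (-5) / Real.log N ≤ ∏ p ∈ PP N, (1 - 1/(p:ℝ)) := by
  have hL : (0:ℝ) < Real.log N := Real.log_pos (by exact_mod_cast by omega)
  have hterm : ∀ p ∈ PP N, Real.exp (-(1/((p:ℝ)-1))) ≤ 1 - 1/(p:ℝ) := by
    intro p hp
    have h2 : (2:ℝ) ≤ p := by exact_mod_cast (mem_PP.1 hp).2.two_le
    have hp1 : (0:ℝ) < (p:ℝ) - 1 := by linarith
    have hpp : (0:ℝ) < p := by linarith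
    have h3 := Real.add_one_le_exp (1/((p:ℝ)-1))
    have h4 : (0:ℝ) < Real.exp (1/((p:ℝ)-1)) := Real.exp_pos _
    have hpos : (0:ℝ) < 1 - 1/(p:ℝ) := by
      rw [sub_pos, div_lt_one hpp]; linarith
    have hid : ((1:ℝ) - 1/p)⁻¹ = 1 + 1/((p:ℝ)-1) := by
      field_simp
      ring
    have h5 : ((1:ℝ) - 1/p)⁻¹ ≤ Real.exp (1/((p:ℝ)-1)) := by
      rw [hid]; linarith
    calc Real.exp (-(1/((p:ℝ)-1))) = (Real.exp (1/((p:ℝ)-1)))⁻¹ := Real.exp_neg _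
      _ ≤ (((1:ℝ) - 1/p)⁻¹)⁻¹ := by
          apply inv_anti₀ (by positivity) h5
      _ = 1 - 1/(p:ℝ) := inv_inv _
  have hprod : Real.exp (-(∑ p ∈ PP N, 1/((p:ℝ)-1))) ≤ ∏ p ∈ PP N, (1 - 1/(p:ℝ)) := by
    rw [← Finset.sum_neg_distrib, Real.exp_sum]
    apply Finset.prod_le_prod
    · intro p hp; positivity
    · exact hterm
  refine le_trans ?_ hprod
  have h5 := sum_inv_pred_le hN
  have : Real.exp (-(Real.log (Real.log N) + 5)) = Real.exp (-5) / Real.log N := by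
    rw [show -(Real.log (Real.log N) + 5) = -5 - Real.log (Real.log N) by ring,
      Real.exp_sub, Real.exp_log hL]
  rw [← this]
  apply Real.exp_le_exp.2
  linarith

lemma dvd_congr_mod {p a b : ℕ} {u v : ℤ} (h : a ≡ b [MOD p]) :
    (p:ℤ) ∣ u * a + v ↔ (p:ℤ) ∣ u * b + v := by
  have h' : (a:ℤ) ≡ b [ZMOD p] := Int.natCast_modEq_iff.2 h
  have h2 : (u * a + v) ≡ (u * b + v) [ZMOD p] := (h'.mul_left u).add_right v
  have hd : (p:ℤ) ∣ (u * b + v) - (u * a + v) := Int.ModEq.dvd h2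
  constructor
  · intro h
    have h3 : u * b + v = (u * a + v) + ((u * b + v) - (u * a + v)) := by ring
    rw [h3]; exact dvd_add h hd
  · intro h
    have h3 : u * a + v = (u * b + v) - ((u * b + v) - (u * a + v)) := by ring
    rw [h3]; exact dvd_sub h hd

lemma cnt_prime {q : ℕ} (hq : q.Prime) {u v : ℤ} (huv : Int.gcd u v = 1) :
    q - 1 ≤ ((Finset.range q).filter (fun a : ℕ => ¬ (q:ℤ) ∣ u * a + v)).card := by
  classical
  have hqZ : Prime (q:ℤ) := Nat.prime_iff_prime_int.1 hq
  have hcard : ((Finset.range q).filter (fun a : ℕ => (q:ℤ) ∣ u * a + v)).card ≤ 1 := by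
    rw [Finset.card_le_one]
    intro a ha b hb
    rw [Finset.mem_filter, Finset.mem_range] at ha hb
    have hdiff : (q:ℤ) ∣ u * ((a:ℤ) - b) := by
      have := dvd_sub ha.2 hb.2
      have heq : (u * a + v) - (u * b + v) = u * ((a:ℤ) - b) := by ring
      rwa [heq] at this
    rcases hqZ.dvd_mul.1 hdiff with hu | hab
    · exfalso
      have hv : (q:ℤ) ∣ v := by
        have := ha.2
        have h2 : (q:ℤ) ∣ u * a := Dvd.dvd.mul_right hu _
        exact (dvd_add_right h2).1 this
      have : (q:ℤ) ∣ (Int.gcd u v : ℤ) := Int.dvd_coe_gcd hu hv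
      rw [huv] at this
      exact hq.one_lt.ne' (by exact_mod_cast Int.eq_one_of_dvd_one (by positivity) this)
    · have : (a:ℤ) - b = 0 := by
        apply Int.eq_zero_of_abs_lt_dvd hab
        have h1 : (a:ℤ) < q := by exact_mod_cast ha.1
        have h2 : (b:ℤ) < q := by exact_mod_cast hb.1
        have h3 : (0:ℤ) ≤ a := Int.natCast_nonneg a
        have h4 : (0:ℤ) ≤ b := Int.natCast_nonneg b
        rw [abs_sub_lt_iff]; constructor <;> linarith
      have : (a:ℤ) = b := by linarith
      exact_mod_cast this
  have hsplit : ((Finset.range q).filter (fun a : ℕ => (q:ℤ) ∣ u * a + v)).card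
      + ((Finset.range q).filter (fun a : ℕ => ¬ (q:ℤ) ∣ u * a + v)).card = q := by
    have h := Finset.card_filter_add_card_filter_not
      (s := Finset.range q) (p := fun a : ℕ => (q:ℤ) ∣ u * a + v)
    simp only [Finset.card_range] at h
    convert h using 3
  omega

lemma cnt (Q : Finset ℕ) (hQ : ∀ p ∈ Q, p.Prime) (u v : ℤ) (huv : Int.gcd u v = 1) :
    ∏ p ∈ Q, (p - 1) ≤
      ((Finset.range (∏ p ∈ Q, p)).filter
        (fun m : ℕ => ∀ p ∈ Q, ¬ ((p:ℤ) ∣ u * m + v))).card := by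
  classical
  induction Q using Finset.induction_on with
  | empty => simp
  | @insert q Q' hq ih =>
    have hq' : q.Prime := hQ q (Finset.mem_insert_self _ _)
    have hQ' : ∀ p ∈ Q', p.Prime := fun p hp => hQ p (Finset.mem_insert_of_mem hp)
    have hco : Nat.Coprime q (∏ p ∈ Q', p) := by
      apply Nat.Coprime.prod_right
      intro p hp
      exact (Nat.coprime_primes hq' (hQ' p hp)).2 (by rintro rfl; exact hq hp)
    set N := ∏ p ∈ Q', p with hN
    have hNpos : 0 < N := Finset.prod_pos fun p hp => (hQ' p hp).pos
    set A := (Finset.range q).filter (fun a : ℕ => ¬ (q:ℤ) ∣ u * a + v) with hA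
    set B := (Finset.range N).filter (fun m : ℕ => ∀ p ∈ Q', ¬ ((p:ℤ) ∣ u * m + v)) with hB
    rw [Finset.prod_insert hq, Finset.prod_insert hq]
    -- injection from A ×ˢ B into the filtered set
    have hinj : ∀ x ∈ A ×ˢ B, (Nat.chineseRemainder hco x.1 x.2 : ℕ) ∈
        (Finset.range (q * N)).filter
          (fun m : ℕ => ∀ p ∈ insert q Q', ¬ ((p:ℤ) ∣ u * m + v)) := by
      rintro ⟨a, b⟩ hx
      rw [Finset.mem_product] at hx
      obtain ⟨ha, hb⟩ := hx
      rw [hA, Finset.mem_filter, Finset.mem_range] at ha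
      rw [hB, Finset.mem_filter, Finset.mem_range] at hb
      set k := (Nat.chineseRemainder hco a b : ℕ) with hk
      have hprop := (Nat.chineseRemainder hco a b).2
      rw [Finset.mem_filter, Finset.mem_range]
      refine ⟨Nat.chineseRemainder_lt_mul hco a b (by omega) (by omega), ?_⟩
      intro p hp
      rcases Finset.mem_insert.1 hp with rfl | hp'
      · have hmod : k ≡ a [MOD p] := hprop.1
        rw [dvd_congr_mod hmod]
        exact ha.2
      · have hmod : k ≡ b [MOD p] := (hprop.2).of_dvd (Finset.dvd_prod_of_mem _ hp')
        rw [dvd_congr_mod hmod]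
        exact hb.2 p hp'
    have hinj2 : Set.InjOn (fun x : ℕ × ℕ => (Nat.chineseRemainder hco x.1 x.2 : ℕ))
        ↑(A ×ˢ B) := by
      rintro ⟨a, b⟩ hx ⟨a', b'⟩ hx' heq
      simp only [Finset.coe_product, Set.mem_prod, Finset.mem_coe] at hx hx'
      obtain ⟨ha, hb⟩ := hx
      obtain ⟨ha', hb'⟩ := hx'
      rw [hA, Finset.mem_filter, Finset.mem_range] at ha ha'
      rw [hB, Finset.mem_filter, Finset.mem_range] at hb hb'
      have h1 := (Nat.chineseRemainder hco a b).2
      have h2 := (Nat.chineseRemainder hco a' b').2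
      simp only at heq
      have haa : a = a' := by
        have e : a % q = a' % q := by
          rw [← h1.1, heq, h2.1]
        rwa [Nat.mod_eq_of_lt ha.1, Nat.mod_eq_of_lt ha'.1] at e
      have hbb : b = b' := by
        have e : b % N = b' % N := by
          rw [← h1.2, heq, h2.2]
        rwa [Nat.mod_eq_of_lt hb.1, Nat.mod_eq_of_lt hb'.1] at e
      simp [haa, hbb]
    have hcardle := Finset.card_le_card_of_injOn _ hinj hinj2
    rw [Finset.card_product] at hcardle
    calc (q - 1) * ∏ p ∈ Q', (p - 1) ≤ A.card * B.card :=
          Nat.mul_le_mul (cnt_prime hq' huv) (ih hQ')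
      _ ≤ _ := hcardle

/-- Lemma 2.1: there is an absolute constant `C > 0` such that among any `s ≥ 5`
pairwise distinct linear functions `u_i n + v_i` with `u_i ≥ 1` and `gcd(u_i, v_i) = 1`
one can find at least `C·s/log s` of them forming an admissible set of linear
functions (for each prime `p` some integer `m` makes `p ∤ ∏ (u_i m + v_i)`). -/
theorem stmt_2 :
    ∃ C : ℝ, 0 < C ∧ ∀ s : ℕ, 5 ≤ s → ∀ u v : ℕ → ℤ,
      (∀ i ∈ Finset.Icc 1 s, 1 ≤ u i) →
      (∀ i ∈ Finset.Icc 1 s, Int.gcd (u i) (v i) = 1) →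
      (∀ i ∈ Finset.Icc 1 s, ∀ j ∈ Finset.Icc 1 s, u i = u j → v i = v j → i = j) →
      ∃ S : Finset ℕ, S ⊆ Finset.Icc 1 s ∧ C * s / Real.log s ≤ (S.card : ℝ) ∧
        ∀ p : ℕ, p.Prime → ∃ m : ℤ, ¬ ((p : ℤ) ∣ ∏ i ∈ S, (u i * m + v i)) := by
  classical
  refine ⟨Real.exp (-5), Real.exp_pos _, ?_⟩
  intro s hs u v hu hgcd _
  set Q := PP s with hQdef
  have hQ : ∀ p ∈ Q, p.Prime := fun p hp => (mem_PP.1 hp).2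
  set W := ∏ p ∈ Q, p with hWdef
  have hWpos : 0 < W := Finset.prod_pos fun p hp => (hQ p hp).pos
  set F : ℕ → Finset ℕ := fun m => (Finset.Icc 1 s).filter
    (fun i => ∀ p ∈ Q, ¬((p:ℤ) ∣ u i * m + v i)) with hF
  -- counting
  have swap : ∑ m ∈ Finset.range W, (F m).card
      = ∑ i ∈ Finset.Icc 1 s,
        ((Finset.range W).filter (fun m : ℕ => ∀ p ∈ Q, ¬((p:ℤ) ∣ u i * m + v i))).card := by
    simp only [hF, Finset.card_filter]
    rw [Finset.sum_comm]
  have hlower : s * ∏ p ∈ Q, (p - 1) ≤ ∑ m ∈ Finset.range W, (F m).card := by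
    rw [swap]
    have : ∀ i ∈ Finset.Icc 1 s, ∏ p ∈ Q, (p-1) ≤
        ((Finset.range W).filter (fun m : ℕ => ∀ p ∈ Q, ¬((p:ℤ) ∣ u i * m + v i))).card :=
      fun i hi => cnt Q hQ (u i) (v i) (hgcd i hi)
    calc s * ∏ p ∈ Q, (p - 1) = ∑ _i ∈ Finset.Icc 1 s, ∏ p ∈ Q, (p-1) := by
          rw [Finset.sum_const, Nat.card_Icc]; simp [smul_eq_mul]
      _ ≤ _ := Finset.sum_le_sum this
  -- pigeonhole
  obtain ⟨m₀, _, hmax⟩ := Finset.exists_max_image (Finset.range W)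
    (fun m => (F m).card) ⟨0, Finset.mem_range.2 hWpos⟩
  have hsum_le : ∑ m ∈ Finset.range W, (F m).card ≤ W * (F m₀).card := by
    calc ∑ m ∈ Finset.range W, (F m).card ≤ ∑ _m ∈ Finset.range W, (F m₀).card :=
          Finset.sum_le_sum fun m hm => hmax m hm
      _ = W * (F m₀).card := by rw [Finset.sum_const, Finset.card_range, smul_eq_mul]
  have hmain : s * ∏ p ∈ Q, (p - 1) ≤ W * (F m₀).card := hlower.trans hsum_le
  refine ⟨F m₀, Finset.filter_subset _ _, ?_, ?_⟩
  · -- size bound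
    have hs2 : (2:ℕ) ≤ s := by omega
    have hlogs : (0:ℝ) < Real.log s := Real.log_pos (by exact_mod_cast by omega)
    have hWR : (0:ℝ) < (W:ℝ) := by exact_mod_cast hWpos
    have hcastprod : ((∏ p ∈ Q, (p - 1) : ℕ) : ℝ) = ∏ p ∈ Q, ((p:ℝ) - 1) := by
      push_cast [Finset.prod_congr]
      refine Finset.prod_congr rfl fun p hp => ?_
      have := (hQ p hp).one_lt
      rw [Nat.cast_sub (by omega)]
      norm_num
    have hprod_eq : ∏ p ∈ Q, ((p:ℝ) - 1) = (W:ℝ) * ∏ p ∈ Q, (1 - 1/(p:ℝ)) := by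
      rw [hWdef]
      push_cast
      rw [← Finset.prod_mul_distrib]
      refine Finset.prod_congr rfl fun p hp => ?_
      have hp2 : (0:ℝ) < (p:ℝ) := by exact_mod_cast (hQ p hp).pos
      field_simp
    have hreal : (s:ℝ) * ((W:ℝ) * ∏ p ∈ Q, (1 - 1/(p:ℝ))) ≤ (W:ℝ) * ((F m₀).card : ℝ) := by
      have := hmain
      have hcast : (s:ℝ) * ((∏ p ∈ Q, (p - 1) : ℕ) : ℝ) ≤ (W:ℝ) * ((F m₀).card : ℝ) := by
        exact_mod_cast hmain
      rwa [hcastprod, hprod_eq] at hcast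
    have hdivW : (s:ℝ) * ∏ p ∈ Q, (1 - 1/(p:ℝ)) ≤ ((F m₀).card : ℝ) := by
      have h : (W:ℝ) * ((s:ℝ) * ∏ p ∈ Q, (1 - 1/(p:ℝ))) ≤ (W:ℝ) * ((F m₀).card : ℝ) := by
        rw [show (W:ℝ) * ((s:ℝ) * ∏ p ∈ Q, (1 - 1/(p:ℝ)))
          = (s:ℝ) * ((W:ℝ) * ∏ p ∈ Q, (1 - 1/(p:ℝ))) from by ring]
        exact hreal
      exact le_of_mul_le_mul_left h hWR
    have hm3 := mertens3 hs2
    calc Real.exp (-5) * s / Real.log s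
        = (s:ℝ) * (Real.exp (-5) / Real.log s) := by ring
      _ ≤ (s:ℝ) * ∏ p ∈ Q, (1 - 1/(p:ℝ)) := by
          apply mul_le_mul_of_nonneg_left hm3 (by positivity)
      _ ≤ _ := hdivW
  · -- admissibility
    intro p hp
    rcases le_or_gt p s with hps | hps
    · -- p ≤ s : use m₀
      refine ⟨(m₀ : ℤ), ?_⟩
      intro hdvd
      have hpQ : p ∈ Q := mem_PP.2 ⟨hps, hp⟩
      obtain ⟨i, hi, hdvd'⟩ := (Prime.dvd_finset_prod_iff (Nat.prime_iff_prime_int.1 hp) _).1 hdvd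
      have := (Finset.mem_filter.1 hi).2 p hpQ
      exact this hdvd'
    · -- p > s : counting in ZMod p
      haveI : Fact p.Prime := ⟨hp⟩
      set bad : Finset (ZMod p) := (F m₀).biUnion
        (fun i => Finset.univ.filter (fun x => (u i : ZMod p) * x + (v i : ZMod p) = 0)) with hbad
      have hcard1 : ∀ i ∈ F m₀,
          (Finset.univ.filter (fun x : ZMod p => (u i : ZMod p) * x + (v i : ZMod p) = 0)).card ≤ 1 := by
        intro i hi
        have hiIcc : i ∈ Finset.Icc 1 s := Finset.filter_subset _ _ hi
        rw [Finset.card_le_one]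
        intro x hx y hy
        rw [Finset.mem_filter] at hx hy
        have hxy : (u i : ZMod p) * (x - y) = 0 := by
          have := hx.2
          have := hy.2
          ring_nf
          linear_combination hx.2 - hy.2
        rcases mul_eq_zero.1 hxy with hu0 | hxy0
        · exfalso
          have hpu : (p:ℤ) ∣ u i := (ZMod.intCast_zmod_eq_zero_iff_dvd _ _).1 hu0
          have hpv : (p:ℤ) ∣ v i := by
            have hv0 : (v i : ZMod p) = 0 := by
              have := hx.2
              rw [hu0] at this
              simpa using this
            exact (ZMod.intCast_zmod_eq_zero_iff_dvd _ _).1 hv0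
          have hdg : (p:ℤ) ∣ (Int.gcd (u i) (v i) : ℤ) := Int.dvd_coe_gcd hpu hpv
          rw [hgcd i hiIcc] at hdg
          have := Int.eq_one_of_dvd_one (by positivity) hdg
          have := hp.one_lt
          omega
        · have := sub_eq_zero.1 hxy0
          exact this
      have hbadcard : bad.card ≤ (F m₀).card := by
        calc bad.card ≤ ∑ i ∈ F m₀, (Finset.univ.filter
              (fun x : ZMod p => (u i : ZMod p) * x + (v i : ZMod p) = 0)).card :=
              Finset.card_biUnion_le
          _ ≤ ∑ _i ∈ F m₀, 1 := Finset.sum_le_sum hcard1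
          _ = (F m₀).card := by rw [Finset.sum_const, smul_eq_mul, mul_one]
      have hFcard : (F m₀).card ≤ s := by
        calc (F m₀).card ≤ (Finset.Icc 1 s).card := Finset.card_le_card (Finset.filter_subset _ _)
          _ = s := by rw [Nat.card_Icc]; omega
      have hexists : ∃ x : ZMod p, x ∉ bad := by
        by_contra hcon
        push_neg at hcon
        have : (Finset.univ : Finset (ZMod p)) ⊆ bad := fun x _ => hcon x
        have hle := Finset.card_le_card this
        rw [Finset.card_univ, ZMod.card] at hle
        omega
      obtain ⟨x, hx⟩ := hexists
      refine ⟨((x.val : ℕ) : ℤ), ?_⟩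
      intro hdvd
      obtain ⟨i, hi, hdvd'⟩ := (Prime.dvd_finset_prod_iff (Nat.prime_iff_prime_int.1 hp) _).1 hdvd
      apply hx
      rw [hbad, Finset.mem_biUnion]
      refine ⟨i, hi, ?_⟩
      rw [Finset.mem_filter]
      refine ⟨Finset.mem_univ _, ?_⟩
      have h0 : ((u i * (x.val : ℤ) + v i : ℤ) : ZMod p) = 0 :=
        (ZMod.intCast_zmod_eq_zero_iff_dvd _ _).2 hdvd'
      push_cast at h0
      rwa [ZMod.natCast_val, ZMod.cast_id] at h0
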